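/- Let A be a unitary on a Hilbert space and |ψ⟩ = A|0⟩ = sin θ |ψ_good⟩ + cos θ |ψ_bad⟩ with |ψ_good⟩ ⊥ |ψ_bad⟩ both unit vectors. Let U_bad⊥ be the reflection fixing |ψ_bad⟩ and negating its orthogonal complement restricted to the span, and U_{|ψ⟩}⊥ = A U_{|0⟩}⊥ A† the reflection about |ψ⟩. Then the amplitude amplification operator Q = U_{|ψ⟩}⊥ U_bad⊥ satisfies Q^k |ψ⟩ = sin((2k+1)θ)|ψ_good⟩ + cos((2k+1)θ)|ψ_bad⟩ for all k ≥ 0. -/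
import Mathlib


open scoped ComplexConjugate

theorem amplitude_amplification
    {H : Type*} [NormedAddCommGroup H] [InnerProductSpace ℂ H]
    (g b : H) (hg : ‖g‖ = 1) (hb : ‖b‖ = 1) (hgb : inner (𝕜 := ℂ) g b = 0)
    (θ : ℝ) (Ubad Upsi : Module.End ℂ H)
    -- `U_bad⊥` reflects about `|ψ_bad⟩` in the plane spanned by the good and bad states
    (hUbad : ∀ φ : ℝ,
      Ubad ((Real.sin φ : ℂ) • g + (Real.cos φ : ℂ) • b) =
        -((Real.sin φ : ℂ) • g) + (Real.cos φ : ℂ) • b)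
    -- `U_{|ψ⟩}⊥ = A U_{|0⟩}⊥ A†` reflects about `|ψ⟩ = sin θ |ψ_good⟩ + cos θ |ψ_bad⟩`
    (hUpsi : ∀ φ : ℝ,
      Upsi ((Real.sin φ : ℂ) • g + (Real.cos φ : ℂ) • b) =
        (Real.sin (2 * θ - φ) : ℂ) • g + (Real.cos (2 * θ - φ) : ℂ) • b) :
    ∀ k : ℕ,
      ((Upsi * Ubad) ^ k) ((Real.sin θ : ℂ) • g + (Real.cos θ : ℂ) • b) =
        (Real.sin ((2 * k + 1) * θ) : ℂ) • g + (Real.cos ((2 * k + 1) * θ) : ℂ) • b := by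
  have step : ∀ φ : ℝ,
      (Upsi * Ubad) ((Real.sin φ : ℂ) • g + (Real.cos φ : ℂ) • b) =
        (Real.sin (2 * θ + φ) : ℂ) • g + (Real.cos (2 * θ + φ) : ℂ) • b := by
    intro φ
    have h1 : Ubad ((Real.sin φ : ℂ) • g + (Real.cos φ : ℂ) • b) =
        (Real.sin (-φ) : ℂ) • g + (Real.cos (-φ) : ℂ) • b := by
      rw [hUbad φ, Real.sin_neg, Real.cos_neg]
      push_cast
      rw [neg_smul]
    show Upsi (Ubad _) = _
    rw [h1, hUpsi (-φ)]
    ring_nf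
  intro k
  induction k with
  | zero => simp
  | succ k ih =>
    have : ((Upsi * Ubad) ^ (k + 1)) ((Real.sin θ : ℂ) • g + (Real.cos θ : ℂ) • b)
        = (Upsi * Ubad) (((Upsi * Ubad) ^ k) ((Real.sin θ : ℂ) • g + (Real.cos θ : ℂ) • b)) := by
      rw [pow_succ']; rfl
    rw [this, ih, step]
    have harg : 2 * θ + (2 * ↑k + 1) * θ = (2 * ↑(k + 1) + 1) * θ := by push_cast; ring
    rw [harg]
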